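/- Outer limit inclusion (Theorem 3, part 2): with the same setup as the inner limit inclusion, every accumulation point of sequences (Q_m)_{m∈ℕ} with Q_m ∈ 𝒬_s^(m) belongs to 𝒬_s; i.e., limsup_{m→∞} 𝒬_s^(m) ⊆ 𝒬_s (Painlevé–Kuratowski outer limit). -/

import Mathlib

open Finset Filter

/-- Theorem 3, outer limit inclusion: every accumulation point of
a sequence `(Q_m)` with `Q_m ∈ 𝒬ₛ⁽ᵐ⁾` for all `m ≥ 1` belongs to `𝒬ₛ`, where
`𝒬ₛ⁽ᵐ⁾ = {(T−I)/δ⁽ᵐ⁾ : T(x,y) = (s·A(x,y)+n_xy⁽ᵐ⁾)/(s+n_x⁽ᵐ⁾), A ∈ int(𝕋)}`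
and `𝒬ₛ = {Q_A : A ∈ 𝕋}`, assuming the off-diagonal counts `n_xy⁽ᵐ⁾` are
eventually equal to `n_xy` and `δ⁽ᵐ⁾·n_x⁽ᵐ⁾ → d_x > 0` with `δ⁽ᵐ⁾ = tmax/m`. -/
theorem stmt_13 (S : Type*) [Fintype S] [DecidableEq S]
    (tmax : ℝ) (htmax : 0 < tmax) (s : ℝ) (hs : 0 ≤ s)
    (ndisc : ℕ → S → S → ℕ)
    (nrow : ℕ → S → ℕ) (hnrow : ∀ m x, nrow m x = ∑ y, ndisc m x y)
    (n : S → S → ℝ)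
    (hn : ∀ x y, x ≠ y → ∀ᶠ m in atTop, (ndisc m x y : ℝ) = n x y)
    (d : S → ℝ) (hd : ∀ x, 0 < d x)
    (hdn : ∀ x, Tendsto (fun m : ℕ => (tmax / m) * (nrow m x : ℝ)) atTop (nhds (d x)))
    (Qs : Set (Matrix S S ℝ))
    (hQs : Qs = {Q | ∃ A : Matrix S S ℝ,
      (∀ x y, 0 ≤ A x y) ∧ (∀ x, ∑ y, A x y = 1) ∧
      (∀ x y, Q x y =
        if x = y then -∑ z ∈ Finset.univ.erase x, (s * A x z + n x z) / d x
        else (s * A x y + n x y) / d x)})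
    (Qsm : ℕ → Set (Matrix S S ℝ))
    (hQsm : ∀ m, Qsm m = {Q | ∃ A : Matrix S S ℝ,
      (∀ x y, 0 < A x y) ∧ (∀ x, ∑ y, A x y = 1) ∧
      (∀ x y, Q x y =
        ((s * A x y + (ndisc m x y : ℝ)) / (s + (nrow m x : ℝ))
          - (if x = y then (1 : ℝ) else 0)) / (tmax / m))}) :
    ∀ Qseq : ℕ → Matrix S S ℝ,
      (∀ m : ℕ, 0 < m → Qseq m ∈ Qsm m) →
      ∀ (φ : ℕ → ℕ), StrictMono φ →
      ∀ Qlim : Matrix S S ℝ,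
        Tendsto (fun k => Qseq (φ k)) atTop (nhds Qlim) → Qlim ∈ Qs := by
  intro Qseq hQseq φ hφ Qlim hlim
  classical
  -- choose stochastic matrices generating Qseq m for m > 0, with entries in [0,1]
  have key : ∀ m : ℕ, ∃ A : Matrix S S ℝ,
      (∀ x y, A x y ∈ Set.Icc (0:ℝ) 1) ∧
      (0 < m → (∀ x, ∑ y, A x y = 1) ∧
        ∀ x y, Qseq m x y =
          ((s * A x y + (ndisc m x y : ℝ)) / (s + (nrow m x : ℝ))
            - (if x = y then (1:ℝ) else 0)) / (tmax / m)) := by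
    intro m
    rcases Nat.eq_zero_or_pos m with rfl | hm
    · exact ⟨fun _ _ => 0, fun x y => ⟨le_refl 0, zero_le_one⟩, by simp⟩
    · have hmem := hQseq m hm
      rw [hQsm m] at hmem
      obtain ⟨A, hA0, hA1, hAQ⟩ := hmem
      refine ⟨A, fun x y => ⟨(hA0 x y).le, ?_⟩, fun _ => ⟨hA1, hAQ⟩⟩
      calc A x y ≤ ∑ z, A x z :=
            Finset.single_le_sum (fun z _ => (hA0 x z).le) (Finset.mem_univ y)
        _ = 1 := hA1 x
  choose Am hAmK hAm using key
  -- compactness of [0,1]-entried matrices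
  have hKcomp : IsCompact
      (Set.pi Set.univ (fun _ : S => Set.pi Set.univ fun _ : S => Set.Icc (0:ℝ) 1) :
        Set (Matrix S S ℝ)) :=
    isCompact_univ_pi fun _ => isCompact_univ_pi fun _ => isCompact_Icc
  haveI : @FirstCountableTopology (Matrix S S ℝ) Pi.topologicalSpace :=
    inferInstanceAs (FirstCountableTopology (S → S → ℝ))
  obtain ⟨Alim, hAlimK, ψ, hψ, hAconv⟩ :=
    hKcomp.tendsto_subseq (x := fun k => Am (φ k))
      (fun k => fun x _ y _ => hAmK (φ k) x y)
  have hAlim01 : ∀ x y, Alim x y ∈ Set.Icc (0:ℝ) 1 :=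
    fun x y => hAlimK x (Set.mem_univ x) y (Set.mem_univ y)
  set m : ℕ → ℕ := fun k => φ (ψ k) with hmdef
  have hmmono : StrictMono m := hφ.comp hψ
  have hmtop : Tendsto m atTop atTop := hmmono.tendsto_atTop
  have hmk : ∀ k, k ≤ m k := fun k => hmmono.le_apply
  -- entrywise convergence of the A's
  have hAe : ∀ x y, Tendsto (fun k => Am (m k) x y) atTop (nhds (Alim x y)) := by
    intro x y
    exact tendsto_pi_nhds.mp (tendsto_pi_nhds.mp hAconv x) y
  -- entrywise convergence of the Q's
  have hQe : ∀ x y, Tendsto (fun k => Qseq (m k) x y) atTop (nhds (Qlim x y)) := by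
    intro x y
    have h := hlim.comp hψ.tendsto_atTop
    exact tendsto_pi_nhds.mp (tendsto_pi_nhds.mp h x) y
  -- the denominator limit
  have hD : ∀ x, Tendsto (fun k => (tmax / (m k : ℝ)) * (s + (nrow (m k) x : ℝ)))
      atTop (nhds (d x)) := by
    intro x
    have h0 : Tendsto (fun mm : ℕ => tmax / (mm : ℝ)) atTop (nhds 0) :=
      tendsto_const_div_atTop_nhds_zero_nat tmax
    have h1 := ((h0.mul_const s).add (hdn x)).comp hmtop
    rw [zero_mul, zero_add] at h1
    refine h1.congr fun k => ?_
    simp only [Function.comp]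
    ring
  -- eventual identity for Qseq entries
  have hident : ∀ x y, ∀ᶠ k in atTop, Qseq (m k) x y =
      (if x = y then -∑ z ∈ Finset.univ.erase x, (s * Am (m k) x z + n x z)
        else (s * Am (m k) x y + n x y))
        / ((tmax / (m k : ℝ)) * (s + (nrow (m k) x : ℝ))) := by
    intro x y
    have evpos : ∀ᶠ k in atTop, 0 < (tmax / (m k : ℝ)) * (s + (nrow (m k) x : ℝ)) :=
      (hD x).eventually (eventually_gt_nhds (hd x))
    have evn : ∀ᶠ k in atTop, ∀ z ∈ Finset.univ.erase x, (ndisc (m k) x z : ℝ) = n x z := by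
      rw [eventually_all_finset]
      intro z hz
      exact hmtop.eventually (hn x z (Finset.ne_of_mem_erase hz).symm)
    filter_upwards [evpos, evn, eventually_ge_atTop 1] with k hpos hnd hk1
    have hm1 : 0 < m k := lt_of_lt_of_le hk1 (hmk k)
    have hmR : (0:ℝ) < (m k : ℝ) := by exact_mod_cast hm1
    have hδ : 0 < tmax / (m k : ℝ) := div_pos htmax hmR
    have hb : 0 < s + (nrow (m k) x : ℝ) := by
      by_contra hcon
      push_neg at hcon
      nlinarith
    obtain ⟨hrow, hform⟩ := hAm (m k) hm1
    rw [hform x y]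
    by_cases hxy : x = y
    · subst hxy
      simp only [if_pos rfl, ↓reduceIte]
      have hsumA : ∑ z ∈ Finset.univ.erase x, Am (m k) x z = 1 - Am (m k) x x := by
        rw [Finset.sum_erase_eq_sub (Finset.mem_univ x), hrow x]
      have hsumn : ∑ z ∈ Finset.univ.erase x, (ndisc (m k) x z : ℝ)
          = (nrow (m k) x : ℝ) - (ndisc (m k) x x : ℝ) := by
        have : ((nrow (m k) x : ℝ)) = ∑ z, (ndisc (m k) x z : ℝ) := by
          rw [hnrow]; push_cast; rfl
        rw [this, Finset.sum_erase_eq_sub (Finset.mem_univ x)]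
      have hS : ∑ z ∈ Finset.univ.erase x, (s * Am (m k) x z + n x z)
          = s * (1 - Am (m k) x x) + ((nrow (m k) x : ℝ) - (ndisc (m k) x x : ℝ)) := by
        rw [Finset.sum_congr rfl (fun z hz => by rw [← hnd z hz]),
          Finset.sum_add_distrib, ← Finset.mul_sum, hsumA, hsumn]
      rw [hS]
      field_simp
      ring
    · simp only [if_neg hxy]
      have hy : (ndisc (m k) x y : ℝ) = n x y :=
        hnd y (Finset.mem_erase.mpr ⟨fun h => hxy h.symm, Finset.mem_univ y⟩)
      rw [hy, sub_zero, div_div]; ring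
  -- now verify membership
  rw [hQs]
  refine ⟨Alim, fun x y => (hAlim01 x y).1, ?_, ?_⟩
  · intro x
    have hsum : Tendsto (fun k => ∑ y, Am (m k) x y) atTop (nhds (∑ y, Alim x y)) :=
      tendsto_finset_sum _ fun y _ => hAe x y
    have hone : Tendsto (fun k => ∑ y, Am (m k) x y) atTop (nhds 1) := by
      refine Tendsto.congr' ?_ tendsto_const_nhds
      filter_upwards [eventually_ge_atTop 1] with k hk1
      exact ((hAm (m k) (lt_of_lt_of_le hk1 (hmk k))).1 x).symm
    exact tendsto_nhds_unique hsum hone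
  · intro x y
    set Ninf : ℝ := if x = y then -∑ z ∈ Finset.univ.erase x, (s * Alim x z + n x z)
      else (s * Alim x y + n x y) with hNinf
    have hN : Tendsto (fun k =>
        if x = y then -∑ z ∈ Finset.univ.erase x, (s * Am (m k) x z + n x z)
          else (s * Am (m k) x y + n x y)) atTop (nhds Ninf) := by
      rw [hNinf]
      by_cases hxy : x = y
      · simp only [if_pos hxy]
        exact (tendsto_finset_sum _ fun z _ => ((hAe x z).const_mul s).add_const (n x z)).neg
      · simp only [if_neg hxy]
        exact ((hAe x y).const_mul s).add_const (n x y)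
    have hQ2 : Tendsto (fun k => Qseq (m k) x y) atTop (nhds (Ninf / d x)) :=
      Tendsto.congr' ((hident x y).mono fun k h => h.symm) (hN.div (hD x) (hd x).ne')
    have hval : Qlim x y = Ninf / d x := tendsto_nhds_unique (hQe x y) hQ2
    rw [hval, hNinf]
    by_cases hxy : x = y
    · simp only [if_pos hxy]
      rw [neg_div, Finset.sum_div]
    · simp only [if_neg hxy]
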